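/- arXiv:2206.00333 — 2 statements merged into one kernel-verified Lean document; each statement's English description precedes it below -/
import Mathlib

section
/- Let X be a shift space and σ a return morphism that is planar preserving from (⪯^L, ⪯^R) to (≤^L, ≤^R). Then a word v ∈ L(X) is planar for (⪯^L, ⪯^R) if and only if every extended image of v under σ is planar for (≤^L, ≤^R). -/
noncomputable def occCount {B : Type*} (u w : List B) : ℕ :=
  {i : ℕ | i ≤ w.length ∧ u <+: w.drop i}.ncard

/-- `σ` is a return morphism for the nonempty word `w`: it is injective (as a morphism on
words) and for every letter `a`, the word `σ(a)w` contains exactly two occurrences of `w`,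
one as a proper prefix and one as a proper suffix. -/
def IsReturnMorphism {A B : Type*} (σ : A → List B) (w : List B) : Prop :=
  w ≠ [] ∧ Function.Injective (fun v : List A => (v.map σ).flatten) ∧
    ∀ a : A, σ a ≠ [] ∧ w <+: σ a ++ w ∧ occCount w (σ a ++ w) = 2

def shiftMap {A : Type*} (x : ℤ → A) : ℤ → A := fun n => x (n + 1)

/-- `u` occurs as a factor of the bi-infinite word `x`. -/
def FactorOf {A : Type*} (u : List A) (x : ℤ → A) : Prop :=
  ∃ i : ℤ, ∀ k : Fin u.length, x (i + ((k : ℕ) : ℤ)) = u.get k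

/-- The language of a set of bi-infinite words. -/
def lang {A : Type*} (X : Set (ℤ → A)) : Set (List A) := {u | ∃ x ∈ X, FactorOf u x}

/-- A (nonempty) shift space: a nonempty, closed, shift-invariant subset of `A^ℤ`. -/
def IsShiftSpace {A : Type*} [TopologicalSpace A] (X : Set (ℤ → A)) : Prop :=
  X.Nonempty ∧ IsClosed X ∧ shiftMap '' X = X

/-- The language of the image shift `σ · X`: the factors of the images under `σ`
of the words of the language of `X`. -/
def imageLang {A B : Type*} (σ : A → List B) (X : Set (ℤ → A)) : Set (List B) :=
  {u | ∃ v ∈ lang X, u <:+: (v.map σ).flatten}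

/-- `s` is the longest common suffix of `u` and `v`. -/
def IsLongestCommonSuffix {B : Type*} (s u v : List B) : Prop :=
  s <:+ u ∧ s <:+ v ∧ ∀ t : List B, t <:+ u → t <:+ v → t.length ≤ s.length

/-- `s ∈ T^L(σ)`: `s` is the longest common suffix of `σ(a)` and `σ(b)` for some pair
of distinct letters `a ≠ b`. -/
def memTL {A B : Type*} (σ : A → List B) (s : List B) : Prop :=
  ∃ a b : A, a ≠ b ∧ IsLongestCommonSuffix s (σ a) (σ b)

/-- `σ` is left order preserving from `r` to `le`: for every `s ∈ T^L(σ)`, the partial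
map `φ^L_{σ,s}` (sending `x` with `σ(x) ∈ B* x' s` to `x'`) is order preserving from
the (strict version of the) order `r` to the order `le`. -/
def LeftOrderPreserving {A B : Type*} (σ : A → List B)
    (r : A → A → Prop) (le : B → B → Prop) : Prop :=
  ∀ s : List B, memTL σ s → ∀ x y : A, ∀ x' y' : B, r x y → x ≠ y →
    (∃ u : List B, σ x = u ++ x' :: s) → (∃ u : List B, σ y = u ++ y' :: s) → le x' y'

/-- `p` is the longest common prefix of `u` and `v`. -/
def IsLongestCommonPrefix {B : Type*} (p u v : List B) : Prop :=
  p <+: u ∧ p <+: v ∧ ∀ t : List B, t <+: u → t <+: v → t.length ≤ p.length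

/-- `p ∈ T^R(σ)`: `p` is the longest common prefix of `σ(a)w` and `σ(b)w` for some pair
of distinct letters `a ≠ b`. -/
def memTR {A B : Type*} (σ : A → List B) (w : List B) (p : List B) : Prop :=
  ∃ a b : A, a ≠ b ∧ IsLongestCommonPrefix p (σ a ++ w) (σ b ++ w)

/-- `σ` is right order preserving from `r` to `le`: for every `p ∈ T^R(σ)`, the partial
map `φ^R_{σ,p}` (sending `x` with `σ(x)w ∈ p x' B*` to `x'`) is order preserving from
the (strict version of the) order `r` to the order `le`. -/
def RightOrderPreserving {A B : Type*} (σ : A → List B) (w : List B)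
    (r : A → A → Prop) (le : B → B → Prop) : Prop :=
  ∀ p : List B, memTR σ w p → ∀ x y : A, ∀ x' y' : B, r x y → x ≠ y →
    (∃ u : List B, σ x ++ w = p ++ x' :: u) → (∃ u : List B, σ y ++ w = p ++ y' :: u) →
      le x' y'

/-- The word `v` is planar for the pair of orders `(rL, rR)` with respect to the
language `L`: for all bi-extensions `(a₁, b₁)` and `(a₂, b₂)` of `v`, if `a₁ <L a₂`
then `b₁ ≤R b₂`. -/
def PlanarWord {A : Type*} (L : Set (List A)) (rL rR : A → A → Prop)
    (v : List A) : Prop :=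
  ∀ a₁ b₁ a₂ b₂ : A, (a₁ :: (v ++ [b₁])) ∈ L → (a₂ :: (v ++ [b₂])) ∈ L →
    rL a₁ a₂ → a₁ ≠ a₂ → rR b₁ b₂

/-- `a` and `b` are consecutive for the (total) order `r`. -/
def Consecutive {A : Type*} (r : A → A → Prop) (a b : A) : Prop :=
  r a b ∧ a ≠ b ∧ ∀ c : A, r a c → r c b → c = a ∨ c = b

/-- `u` is an extended image of `v` under the return morphism `σ` for `w`:
`u = s σ(v) p ∈ L(σ·X)` with `p ∈ w B*` and `E_{X,s,p}(v) ≠ ∅`, i.e. there is a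
bi-extension `(a, b)` of `v` with `a ∈ A^L_{σ,s}` and `b ∈ A^R_{σ,p}`. -/
def IsExtendedImage {A B : Type*} (σ : A → List B) (w : List B)
    (X : Set (ℤ → A)) (v : List A) (u : List B) : Prop :=
  ∃ s p : List B, u = s ++ (v.map σ).flatten ++ p ∧ w <+: p ∧ u ∈ imageLang σ X ∧
    ∃ a b : A, (a :: (v ++ [b])) ∈ lang X ∧
      (∃ t : List B, t ≠ [] ∧ σ a = t ++ s) ∧
      (p <+: σ b ++ w ∧ p ≠ σ b ++ w)

namespace Stmt17

variable {A B : Type*}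

/-- flatten of map -/
def flat (σ : A → List B) (v : List A) : List B := (v.map σ).flatten

@[simp] lemma flat_nil (σ : A → List B) : flat σ [] = [] := rfl

@[simp] lemma flat_cons (σ : A → List B) (a : A) (v : List A) :
    flat σ (a :: v) = σ a ++ flat σ v := by simp [flat]

@[simp] lemma flat_append (σ : A → List B) (x y : List A) :
    flat σ (x ++ y) = flat σ x ++ flat σ y := by simp [flat]

@[simp] lemma flat_singleton (σ : A → List B) (a : A) : flat σ [a] = σ a := by simp [flat]

/-- cut points -/
def cut (σ : A → List B) (v : List A) (k : ℕ) : ℕ := (flat σ (v.take k)).length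

@[simp] lemma cut_zero (σ : A → List B) (v : List A) : cut σ v 0 = 0 := by simp [cut]

lemma cut_cons_succ (σ : A → List B) (a : A) (v : List A) (k : ℕ) :
    cut σ (a :: v) (k + 1) = (σ a).length + cut σ v k := by
  simp [cut]

section
variable {σ : A → List B} {w : List B} (hret : IsReturnMorphism σ w)

include hret

lemma w_ne_nil : w ≠ [] := hret.1

lemma sigma_ne_nil (a : A) : σ a ≠ [] := (hret.2.2 a).1

lemma sigma_inj {a b : A} (h : σ a = σ b) : a = b := by
  have h2 : ([a].map σ).flatten = ([b].map σ).flatten := by simpa using h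
  have := hret.2.1 h2
  simpa using this

lemma occ_single (a : A) (i : ℕ) :
    w <+: (σ a ++ w).drop i ↔ i = 0 ∨ i = (σ a).length := by
  have hw : w ≠ [] := hret.1
  have hlen : 0 < w.length := List.length_pos_iff.2 hw
  have hcard := (hret.2.2 a).2.2
  have hpre := (hret.2.2 a).2.1
  have hne : (0 : ℕ) ≠ (σ a).length := by
    have := List.length_pos_iff.2 (sigma_ne_nil hret a); omega
  set S : Set ℕ := {i : ℕ | i ≤ (σ a ++ w).length ∧ w <+: (σ a ++ w).drop i} with hS
  have hfin : S.Finite := Set.Finite.subset (Set.finite_Iic (σ a ++ w).length)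
    (fun i hi => hi.1)
  have hsub : ({0, (σ a).length} : Set ℕ) ⊆ S := by
    rintro i (rfl | rfl)
    · exact ⟨Nat.zero_le _, by simpa using hpre⟩
    · refine ⟨by simp, ?_⟩
      rw [List.drop_append_of_le_length (by simp)]
      simp
  have hcard' : S.ncard = 2 := by
    have : S = {i : ℕ | i ≤ (σ a ++ w).length ∧ w <+: (σ a ++ w).drop i} := hS
    rw [this]; exact hcard
  have hSeq : ({0, (σ a).length} : Set ℕ) = S := by
    apply Set.eq_of_subset_of_ncard_le hsub _ hfin
    rw [hcard', Set.ncard_pair hne]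
  constructor
  · intro h
    by_cases hi : i ≤ (σ a ++ w).length
    · have : i ∈ S := ⟨hi, h⟩
      rw [← hSeq] at this
      simpa using this
    · exfalso
      have := h.length_le
      rw [List.length_drop] at this
      omega
  · intro h
    have : i ∈ S := hSeq ▸ (by simpa using h)
    exact this.2

omit hret in
/-- transfer lemma: to test whether `w` is a prefix of `t ++ Y` where `w <+: Y`,
can replace `Y` by `w`. -/
lemma prefix_w_swap {Y t : List B} (hY : w <+: Y) :
    (w <+: t ++ w) ↔ (w <+: t ++ Y) := by
  obtain ⟨Y', rfl⟩ := hY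
  constructor
  · intro h
    calc w <+: t ++ w := h
    _ <+: (t ++ w) ++ Y' := List.prefix_append _ _
    _ = t ++ (w ++ Y') := by simp
  · intro h
    have h2 : t ++ w <+: t ++ (w ++ Y') := by
      rw [← List.append_assoc]; exact List.prefix_append _ _
    exact List.prefix_of_prefix_length_le h h2 (by simp)

lemma w_prefix_flat_w (v : List A) : w <+: flat σ v ++ w := by
  induction v with
  | nil => simp
  | cons a v ih =>
    rw [flat_cons, List.append_assoc]
    rw [← prefix_w_swap ih]
    exact (hret.2.2 a).2.1

lemma length_le_flat (v : List A) : v.length ≤ (flat σ v).length := by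
  induction v with
  | nil => simp
  | cons a v ih =>
    have := List.length_pos_iff.2 (sigma_ne_nil hret a)
    simp only [flat_cons, List.length_append, List.length_cons]
    omega

lemma w_prefix_flat {v : List A} (h : w.length ≤ (flat σ v).length) : w <+: flat σ v := by
  have h1 := w_prefix_flat_w hret v
  have h1' := List.prefix_iff_eq_take.1 h1
  have h2 : w = (flat σ v).take w.length := by
    conv_lhs => rw [h1']
    rw [List.take_append_of_le_length h]
  rw [List.prefix_iff_eq_take, ← h2]

omit hret in
lemma cut_eq_sum (v : List A) (k : ℕ) :
    cut σ v k = ((v.take k).map (fun a => (σ a).length)).sum := by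
  simp [cut, flat, Function.comp_def]

omit hret in
lemma cut_mono (v : List A) {k k' : ℕ} (h : k ≤ k') : cut σ v k ≤ cut σ v k' := by
  rw [cut_eq_sum, cut_eq_sum]
  have h1 : v.take k = (v.take k').take k := by rw [List.take_take, min_eq_left h]
  have h2 : v.take k' = v.take k ++ (v.take k').drop k := by
    rw [h1, List.take_append_drop]
  rw [h2]
  simp

omit hret in
lemma cut_le (v : List A) (k : ℕ) : cut σ v k ≤ (flat σ v).length := by
  have h : cut σ v k ≤ cut σ v (max k v.length) := cut_mono v (le_max_left _ _)
  have h2 : cut σ v (max k v.length) = (flat σ v).length := by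
    unfold cut
    rw [List.take_of_length_le (le_max_right _ _)]
  omega

omit hret in
lemma cut_sat (v : List A) {k : ℕ} (h : v.length ≤ k) : cut σ v k = (flat σ v).length := by
  unfold cut
  rw [List.take_of_length_le h]

omit hret in
lemma cut_succ_eq (v : List A) {k : ℕ} (h : k < v.length) :
    cut σ v (k + 1) = cut σ v k + (σ v[k]).length := by
  unfold cut
  simp only [flat, List.length_flatten, List.map_take]
  rw [List.take_succ, List.getElem?_eq_getElem (by simpa using h)]
  simp

lemma cut_strict_mono (v : List A) {k k' : ℕ} (h1 : k < k') (h2 : k < v.length) :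
    cut σ v k < cut σ v k' := by
  have hs := cut_succ_eq (σ := σ) v h2
  have hp : 0 < (σ v[k]).length := List.length_pos_iff.2 (sigma_ne_nil hret _)
  have := cut_mono (σ := σ) v (show k + 1 ≤ k' from h1)
  omega

omit hret in
lemma flat_drop_cut (v : List A) {k : ℕ} (h : k ≤ v.length) :
    (flat σ v).drop (cut σ v k) = flat σ (v.drop k) := by
  have h2 : flat σ v = flat σ (v.take k) ++ flat σ (v.drop k) := by
    rw [← flat_append, List.take_append_drop]
  rw [h2]
  exact List.drop_left

omit hret in
lemma flat_drop_eq (v : List A) {k : ℕ} (h : k < v.length) :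
    flat σ (v.drop k) = σ v[k] ++ flat σ (v.drop (k + 1)) := by
  rw [List.drop_eq_getElem_cons h, flat_cons]

lemma occ_iff (v : List A) (i : ℕ) :
    w <+: (flat σ v ++ w).drop i ↔ ∃ k, i = cut σ v k := by
  induction v generalizing i with
  | nil =>
    simp only [flat_nil, List.nil_append]
    constructor
    · intro h
      have h1 := h.length_le
      rw [List.length_drop] at h1
      have h2 : 0 < w.length := List.length_pos_iff.2 hret.1
      exact ⟨0, by simp; omega⟩
    · rintro ⟨k, hk⟩
      have : cut σ ([] : List A) k = 0 := by simp [cut]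
      rw [hk, this]
      simp
  | cons a v ih =>
    have hσ : 0 < (σ a).length := List.length_pos_iff.2 (sigma_ne_nil hret a)
    by_cases hi : i ≤ (σ a).length
    · have h1 : (flat σ (a :: v) ++ w).drop i = (σ a).drop i ++ (flat σ v ++ w) := by
        rw [flat_cons, List.append_assoc, List.drop_append_of_le_length hi]
      have h2 : w <+: flat σ v ++ w := w_prefix_flat_w hret v
      have h3 : (σ a).drop i ++ w = (σ a ++ w).drop i := by
        rw [List.drop_append_of_le_length hi]
      rw [h1, ← prefix_w_swap h2, h3, occ_single hret a i]
      constructor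
      · rintro (rfl | rfl)
        · exact ⟨0, by simp⟩
        · exact ⟨1, by rw [cut_cons_succ]; simp⟩
      · rintro ⟨k, hk⟩
        match k with
        | 0 => left; simpa using hk
        | k + 1 =>
          rw [cut_cons_succ] at hk
          right
          omega
    · push_neg at hi
      have hr : i = (σ a).length + (i - (σ a).length) := by omega
      have h1 : (flat σ (a :: v) ++ w).drop i = (flat σ v ++ w).drop (i - (σ a).length) := by
        rw [flat_cons, List.append_assoc]
        conv_lhs => rw [hr]
        rw [List.drop_length_add_append]
      rw [h1, ih]
      constructor
      · rintro ⟨k, hk⟩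
        exact ⟨k + 1, by rw [cut_cons_succ]; omega⟩
      · rintro ⟨k, hk⟩
        match k with
        | 0 => simp at hk; omega
        | k + 1 =>
          rw [cut_cons_succ] at hk
          exact ⟨k, by omega⟩

end

section Lang
variable {X : Set (ℤ → A)}

lemma lang_infix {u' u : List A} (h : u' <:+: u) (hu : u ∈ lang X) : u' ∈ lang X := by
  obtain ⟨x, hx, i, hi⟩ := hu
  obtain ⟨l, r, rfl⟩ := h
  refine ⟨x, hx, i + l.length, ?_⟩
  intro k
  have hk : (l.length + (k : ℕ)) < (l ++ u' ++ r).length := by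
    have := k.isLt
    simp only [List.length_append]
    omega
  have h2 := hi ⟨l.length + (k : ℕ), hk⟩
  have h3 : (l ++ u' ++ r).get ⟨l.length + (k:ℕ), hk⟩ = u'.get k := by
    have := k.isLt
    simp [List.getElem_append, this]
  rw [h3] at h2
  rw [← h2]
  congr 1
  push_cast
  ring

lemma lang_extend {v : List A} (hv : v ∈ lang X) (n : ℕ) :
    ∃ e : List A, e.length = n ∧ v ++ e ∈ lang X := by
  obtain ⟨x, hx, i, hi⟩ := hv
  refine ⟨(List.range n).map (fun k : ℕ => x (i + (v.length : ℤ) + (k : ℤ))), by simp, x, hx, i, ?_⟩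
  intro k
  have hklt := k.isLt
  simp only [List.length_append, List.length_map, List.length_range] at hklt
  by_cases hk : (k : ℕ) < v.length
  · have h3 : (v ++ (List.range n).map (fun k : ℕ => x (i + (v.length : ℤ) + (k : ℤ)))).get k
        = v.get ⟨(k : ℕ), hk⟩ := by
      simp [List.getElem_append, hk]
    rw [h3]
    exact hi ⟨(k : ℕ), hk⟩
  · push_neg at hk
    have h3 : (v ++ (List.range n).map (fun k : ℕ => x (i + (v.length : ℤ) + (k : ℤ)))).get k
        = x (i + (v.length : ℤ) + (((k : ℕ) - v.length : ℕ) : ℤ)) := by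
      simp [List.getElem_append, Nat.not_lt.2 hk]
    rw [h3]
    congr 1
    push_cast [Nat.cast_sub hk]
    ring

end Lang

section LCS
variable (u v : List B)

lemma exists_lcs : ∃ s, IsLongestCommonSuffix s u v := by
  classical
  set P : ℕ → Prop := fun n => ∃ t : List B, t.length = n ∧ t <:+ u ∧ t <:+ v with hP
  have h0 : P 0 := ⟨[], rfl, List.nil_suffix, List.nil_suffix⟩
  have hb : ∀ n, P n → n ≤ u.length := by
    rintro n ⟨t, rfl, ht, _⟩
    exact ht.length_le
  obtain ⟨t, ht1, ht2, ht3⟩ := Nat.findGreatest_spec (P := P) (n := u.length) (Nat.zero_le _) h0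
  refine ⟨t, ht2, ht3, ?_⟩
  intro t' h1 h2
  have : P t'.length := ⟨t', rfl, h1, h2⟩
  have h4 := Nat.le_findGreatest (n := u.length) (hb _ this) this
  omega

lemma exists_lcp : ∃ p, IsLongestCommonPrefix p u v := by
  classical
  set P : ℕ → Prop := fun n => ∃ t : List B, t.length = n ∧ t <+: u ∧ t <+: v with hP
  have h0 : P 0 := ⟨[], rfl, List.nil_prefix, List.nil_prefix⟩
  have hb : ∀ n, P n → n ≤ u.length := by
    rintro n ⟨t, rfl, ht, _⟩
    exact ht.length_le
  obtain ⟨t, ht1, ht2, ht3⟩ := Nat.findGreatest_spec (P := P) (n := u.length) (Nat.zero_le _) h0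
  refine ⟨t, ht2, ht3, ?_⟩
  intro t' h1 h2
  have : P t'.length := ⟨t', rfl, h1, h2⟩
  have h4 := Nat.le_findGreatest (n := u.length) (hb _ this) this
  omega

end LCS

lemma suffix_of_suffix_length_le {l₁ l₂ l₃ : List B} (h1 : l₁ <:+ l₃) (h2 : l₂ <:+ l₃)
    (h : l₁.length ≤ l₂.length) : l₁ <:+ l₂ := by
  rw [← List.reverse_prefix] at h1 h2 ⊢
  exact List.prefix_of_prefix_length_le h1 h2 (by simpa using h)

lemma getElem_idx_congr {C : Type*} {l : List C} {i j : ℕ} (h : i = j) (hi : i < l.length) :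
    l[i]'hi = l[j]'(h ▸ hi) := by subst h; rfl

section Extract
variable {σ : A → List B} {w : List B} (hret : IsReturnMorphism σ w)

omit hret in
lemma drop_eq_of_append {l l₁ l₂ : List B} (h : l = l₁ ++ l₂) :
    l.drop l₁.length = l₂ := by subst h; exact List.drop_left

omit hret in
lemma drop_add_eq_of_append {l l₁ l₂ : List B} (h : l = l₁ ++ l₂) (i : ℕ) :
    l.drop (l₁.length + i) = l₂.drop i := by subst h; exact List.drop_length_add_append i

omit hret in
lemma cut_norm (v : List A) (k : ℕ) : ∃ k' ≤ v.length, cut σ v k' = cut σ v k := by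
  by_cases h : k ≤ v.length
  · exact ⟨k, h, rfl⟩
  · exact ⟨v.length, le_refl _, by rw [cut_sat v (le_refl _), cut_sat v (by omega)]⟩

include hret

lemma not_sigma_w_prefix {a b : A} (hab : a ≠ b) : ¬ (σ a ++ w <+: σ b ++ w) := by
  intro h
  have hla : 0 < (σ a).length := List.length_pos_iff.2 (sigma_ne_nil hret a)
  obtain ⟨z, hz⟩ := h
  have hw : w <+: (σ b ++ w).drop (σ a).length := by
    have h2 : σ b ++ w = σ a ++ (w ++ z) := by rw [← hz]; simp
    rw [drop_eq_of_append h2]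
    exact List.prefix_append _ _
  rcases (occ_single hret b _).1 hw with h3 | h3
  · omega
  · have hlen : (σ a ++ w).length = (σ b ++ w).length := by
      simp only [List.length_append]; omega
    have := List.IsPrefix.eq_of_length ⟨z, hz⟩ hlen
    have : σ a = σ b := by
      have := List.append_cancel_right (?_ : σ a ++ w = σ b ++ w)
      · exact this
      · exact ‹σ a ++ w = σ b ++ w›
    exact hab (sigma_inj hret this)

lemma not_sigma_suffix {a b : A} (hab : a ≠ b) : ¬ (σ a <:+ σ b) := by
  rintro ⟨q, hq⟩
  have hla : 0 < (σ a).length := List.length_pos_iff.2 (sigma_ne_nil hret a)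
  have hq0 : q ≠ [] := by
    rintro rfl
    simp at hq
    exact hab (sigma_inj hret hq)
  have hw : w <+: (σ b ++ w).drop q.length := by
    have h2 : σ b ++ w = q ++ (σ a ++ w) := by rw [← hq]; simp
    rw [drop_eq_of_append h2]
    exact (hret.2.2 a).2.1
  rcases (occ_single hret b _).1 hw with h3 | h3
  · exact hq0 (List.length_eq_zero_iff.1 h3)
  · have : (σ b).length = q.length + (σ a).length := by rw [← hq]; simp
    omega

/-- single letter cut characterization -/
lemma occ_single' (b : A) {r : ℕ} (h : w <+: (σ b ++ w).drop r) :
    r = 0 ∨ r = (σ b).length := (occ_single hret b r).1 h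

set_option maxHeartbeats 1000000 in
/-- The key extraction lemma: any bi-extension of an extended image comes from
a bi-extension of `v`. -/
lemma extract {X : Set (ℤ → A)} {v : List A} {s p : List B}
    (hwp : w <+: p)
    {aw bw : A} {tw : List B} (htw : tw ≠ []) (hsaw : σ aw = tw ++ s)
    (hpbw : p <+: σ bw ++ w) (hpbw' : p ≠ σ bw ++ w)
    {c d : B} (hmem : (c :: ((s ++ flat σ v ++ p) ++ [d])) ∈ imageLang σ X) :
    ∃ a b : A, (a :: (v ++ [b])) ∈ lang X ∧ (∃ t : List B, σ a = t ++ c :: s) ∧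
      p ++ [d] <+: σ b ++ w := by
  classical
  obtain ⟨v₀, hv₀, hinf⟩ := hmem
  obtain ⟨e, helen, hv'⟩ := lang_extend hv₀ w.length
  set v' : List A := v₀ ++ e with hv'def
  obtain ⟨pre, suf₀, hG0⟩ := hinf
  set suf : List B := suf₀ ++ flat σ e with hsufdef
  set G : List B := flat σ v' with hGdef
  have hsuflen : w.length ≤ suf.length := by
    have h1 := length_le_flat hret e
    simp only [hsufdef, List.length_append]
    omega
  have hG0' : pre ++ (c :: ((s ++ flat σ v ++ p) ++ [d])) ++ suf₀ = flat σ v₀ := hG0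
  have hG : G = ((pre ++ [c]) ++ s) ++ flat σ v ++ ((p ++ [d]) ++ suf) := by
    have h1 : G = flat σ v₀ ++ flat σ e := by rw [hGdef, hv'def, flat_append]
    rw [h1, ← hG0']
    simp [List.append_assoc, hsufdef]
  set Pfx : List B := (pre ++ [c]) ++ s with hPfx
  set Z : List B := (p ++ [d]) ++ suf with hZ
  -- the two master split equalities
  have hsplit : G ++ w = Pfx ++ (flat σ v ++ (Z ++ w)) := by
    rw [hG]; simp [List.append_assoc]
  have hsplitG : G = Pfx ++ (flat σ v ++ Z) := by
    rw [hG]; simp [List.append_assoc]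
  have hwZ : w <+: Z ++ w := by
    have h1 : p <+: Z ++ w := by
      refine ⟨[d] ++ suf ++ w, ?_⟩
      simp [hZ, List.append_assoc]
    exact hwp.trans h1
  -- occurrences at the cuts of v, shifted by Pfx.length
  have occA : ∀ m, ∃ k ≤ v'.length, cut σ v' k = Pfx.length + cut σ v m := by
    intro m
    have h1 : w <+: (G ++ w).drop (Pfx.length + cut σ v m) := by
      rw [drop_add_eq_of_append hsplit]
      rw [List.drop_append_of_le_length (cut_le v _)]
      rw [← prefix_w_swap hwZ]
      have h2 : (flat σ v).drop (cut σ v m) ++ w = (flat σ v ++ w).drop (cut σ v m) :=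
        (List.drop_append_of_le_length (cut_le v _)).symm
      rw [h2, occ_iff hret]
      exact ⟨m, rfl⟩
    rw [occ_iff hret] at h1
    obtain ⟨k, hk⟩ := h1
    obtain ⟨k', hk'1, hk'2⟩ := cut_norm (σ := σ) v' k
    exact ⟨k', hk'1, by omega⟩
  obtain ⟨k₀, hk₀le, hk₀⟩ := occA 0
  rw [cut_zero, Nat.add_zero] at hk₀
  -- Claim B: cut alignment
  have hB : ∀ m, m ≤ v.length → k₀ + m ≤ v'.length ∧
      cut σ v' (k₀ + m) = Pfx.length + cut σ v m := by
    intro m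
    induction m with
    | zero => exact fun _ => ⟨by omega, by simpa using hk₀⟩
    | succ m ih =>
      intro hm
      obtain ⟨ih1, ih2⟩ := ih (by omega)
      obtain ⟨k, hkle, hk⟩ := occA (m + 1)
      have hlt : cut σ v m < cut σ v (m + 1) :=
        cut_strict_mono hret v (by omega) (by omega)
      have hkm_lt : k₀ + m < v'.length := by
        by_contra h
        push_neg at h
        have h1 : cut σ v' (k₀ + m) = (flat σ v').length := cut_sat v' h
        have h2 : cut σ v' k ≤ (flat σ v').length := cut_le v' k
        omega
      have hkgt : k₀ + m < k := by
        by_contra h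
        push_neg at h
        have := cut_mono (σ := σ) v' h
        omega
      have hup : cut σ v' (k₀ + m + 1) ≤ Pfx.length + cut σ v (m + 1) := by
        have := cut_mono (σ := σ) v' (show k₀ + m + 1 ≤ k by omega)
        omega
      have hlow : cut σ v' (k₀ + m) < cut σ v' (k₀ + m + 1) :=
        cut_strict_mono hret v' (by omega) hkm_lt
      -- no middle cut
      have heq : cut σ v' (k₀ + m + 1) = Pfx.length + cut σ v (m + 1) := by
        by_contra hne
        set i := cut σ v' (k₀ + m + 1) with hi
        have hi1 : Pfx.length + cut σ v m < i := by omega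
        have hi2 : i < Pfx.length + cut σ v (m + 1) := by omega
        set r := i - Pfx.length with hr
        have hrlt : cut σ v m < r ∧ r < cut σ v (m + 1) := by omega
        have hocc : w <+: (G ++ w).drop i := by
          rw [occ_iff hret]; exact ⟨k₀ + m + 1, rfl⟩
        have hieq : i = Pfx.length + r := by omega
        rw [hieq, drop_add_eq_of_append hsplit] at hocc
        rw [List.drop_append_of_le_length (by
          have := cut_le (σ := σ) v (m+1); omega)] at hocc
        rw [← prefix_w_swap hwZ] at hocc
        have h2 : (flat σ v).drop r ++ w = (flat σ v ++ w).drop r :=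
          (List.drop_append_of_le_length (by
            have := cut_le (σ := σ) v (m+1); omega)).symm
        rw [h2, occ_iff hret] at hocc
        obtain ⟨k₂, hk₂⟩ := hocc
        obtain ⟨k₂', hk₂'1, hk₂'2⟩ := cut_norm (σ := σ) v k₂
        by_cases hc : k₂' ≤ m
        · have := cut_mono (σ := σ) v hc
          omega
        · have := cut_mono (σ := σ) v (show m + 1 ≤ k₂' by omega)
          omega
      exact ⟨by omega, heq⟩
  -- letters agree
  have hkb_lt : ∀ m, m < v.length → k₀ + m < v'.length := by
    intro m hm
    have := (hB (m+1) (by omega)).1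
    omega
  have hLet : ∀ m (hm : m < v.length),
      v'[k₀ + m]'(hkb_lt m hm) = v[m]'hm := by
    intro m hm
    have hmlt := hkb_lt m hm
    have h1 : G.drop (cut σ v' (k₀ + m)) =
        σ (v'[k₀ + m]'(hkb_lt m hm)) ++ flat σ (v'.drop (k₀ + m + 1)) := by
      rw [hGdef, flat_drop_cut v' (by omega), flat_drop_eq v' (hkb_lt m hm)]
    have h2 : G.drop (cut σ v' (k₀ + m)) =
        σ (v[m]'hm) ++ (flat σ (v.drop (m + 1)) ++ Z) := by
      rw [(hB m (by omega)).2, drop_add_eq_of_append hsplitG,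
        List.drop_append_of_le_length (cut_le v _), flat_drop_cut v (by omega),
        flat_drop_eq v hm]
      simp [List.append_assoc]
    have hlen1 : (σ (v'[k₀ + m]'(hkb_lt m hm))).length =
        (σ (v[m]'hm)).length := by
      have e1 := cut_succ_eq (σ := σ) v' (hkb_lt m hm)
      have e2 := cut_succ_eq (σ := σ) v hm
      have e3 := (hB m (by omega)).2
      have e4 := (hB (m+1) (by omega)).2
      rw [show k₀ + m + 1 = k₀ + (m + 1) by omega] at e1
      omega
    have h3 : σ (v'[k₀ + m]'(hkb_lt m hm)) = σ (v[m]'hm) := by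
      have t1 : σ (v'[k₀ + m]'(hkb_lt m hm)) =
          (G.drop (cut σ v' (k₀ + m))).take (σ (v'[k₀ + m]'(hkb_lt m hm))).length := by
        rw [h1, List.take_left]
      have t2 : σ (v[m]'hm) =
          (G.drop (cut σ v' (k₀ + m))).take (σ (v[m]'hm)).length := by
        rw [h2, List.take_left]
      rw [t1, t2, hlen1]
    exact sigma_inj hret h3
  -- Claim C: left letter
  have hk₀pos : 1 ≤ k₀ := by
    rcases Nat.eq_zero_or_pos k₀ with h | h
    · exfalso
      rw [h, cut_zero] at hk₀
      have : 0 < Pfx.length := by simp [hPfx]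
      omega
    · exact h
  have hprevlt : cut σ v' (k₀ - 1) < cut σ v' k₀ :=
    cut_strict_mono hret v' (by omega) (by omega)
  have hpc : (pre ++ [c]).length = pre.length + 1 := by simp
  have hPfxlen : Pfx.length = pre.length + 1 + s.length := by simp [hPfx]; omega
  have hprev_le : cut σ v' (k₀ - 1) ≤ pre.length := by
    by_contra h
    push_neg at h
    set r := cut σ v' (k₀ - 1) - (pre ++ [c]).length with hrdef
    have hrs : r < s.length := by omega
    have hocc : w <+: (G ++ w).drop (cut σ v' (k₀ - 1)) := by
      rw [occ_iff hret]; exact ⟨k₀ - 1, rfl⟩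
    have hre : cut σ v' (k₀ - 1) = (pre ++ [c]).length + r := by omega
    have hsplit2 : G ++ w = (pre ++ [c]) ++ (s ++ (flat σ v ++ (Z ++ w))) := by
      rw [hsplit, hPfx]; simp [List.append_assoc]
    rw [hre, drop_add_eq_of_append hsplit2,
      List.drop_append_of_le_length (by omega)] at hocc
    have hocc2 : w <+: (s.drop r ++ flat σ v) ++ (Z ++ w) := by
      rw [List.append_assoc]; exact hocc
    rw [← prefix_w_swap hwZ] at hocc2
    -- transfer to the word aw :: v
    have hocc3 : w <+: (flat σ (aw :: v) ++ w).drop (tw.length + r) := by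
      have hsplit3 : flat σ (aw :: v) ++ w = tw ++ (s ++ (flat σ v ++ w)) := by
        rw [flat_cons, hsaw]; simp [List.append_assoc]
      rw [drop_add_eq_of_append hsplit3,
        List.drop_append_of_le_length (by omega), ← List.append_assoc]
      exact hocc2
    rw [occ_iff hret] at hocc3
    obtain ⟨k₂, hk₂⟩ := hocc3
    have htwpos : 0 < tw.length := List.length_pos_iff.2 htw
    match k₂, hk₂ with
    | 0, hk₂ => rw [cut_zero] at hk₂; omega
    | k₂ + 1, hk₂ =>
      rw [cut_cons_succ, hsaw] at hk₂
      simp only [List.length_append] at hk₂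
      omega
  have hk₀m : k₀ - 1 < v'.length := by omega
  set a : A := v'[k₀ - 1]'hk₀m with ha
  have hσa : (σ a).length = cut σ v' k₀ - cut σ v' (k₀ - 1) := by
    have h5 := cut_succ_eq (σ := σ) v' hk₀m
    rw [show k₀ - 1 + 1 = k₀ by omega] at h5
    rw [← ha] at h5
    omega
  set ecut := pre.length - cut σ v' (k₀ - 1) with he
  have hD1 : G.drop (cut σ v' (k₀ - 1)) = σ a ++ flat σ (v'.drop k₀) := by
    rw [hGdef, flat_drop_cut v' (by omega), flat_drop_eq v' hk₀m,
      show k₀ - 1 + 1 = k₀ by omega]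
  have hecut : ecut + (s.length + 1) = (σ a).length := by omega
  have hdropa : (σ a).drop ecut = c :: s := by
    have h6 : G = pre ++ (c :: (s ++ (flat σ v ++ Z))) := by
      rw [hsplitG, hPfx]; simp [List.append_assoc]
    have hGa : G.drop pre.length = c :: (s ++ (flat σ v ++ Z)) := drop_eq_of_append h6
    have hGa2 : G.drop pre.length = (σ a).drop ecut ++ flat σ (v'.drop k₀) := by
      have h7 : pre.length = cut σ v' (k₀ - 1) + ecut := by omega
      rw [h7, ← List.drop_drop, hD1, List.drop_append_of_le_length (by omega)]
    have hlen2 : ((σ a).drop ecut).length = s.length + 1 := by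
      rw [List.length_drop]; omega
    have t1 : (σ a).drop ecut = (G.drop pre.length).take (s.length + 1) := by
      rw [hGa2, List.take_left' hlen2]
    rw [t1, hGa, List.take_succ_cons, List.take_left]
  have hta : σ a = (σ a).take ecut ++ (c :: s) := by
    rw [← hdropa]; exact (List.take_append_drop _ _).symm
  -- Claim D: right letter
  have hkvle := (hB v.length (le_refl _)).1
  have hkveq := (hB v.length (le_refl _)).2
  have hcutvv : cut σ v v.length = (flat σ v).length := cut_sat v (le_refl _)
  have hZpos : 0 < Z.length := by simp [hZ]
  have hGlen : G.length = Pfx.length + (flat σ v).length + Z.length := by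
    rw [hsplitG]; simp only [List.length_append]; omega
  have hkv_lt : k₀ + v.length < v'.length := by
    by_contra h
    push_neg at h
    have h1 : cut σ v' (k₀ + v.length) = G.length := by rw [hGdef]; exact cut_sat v' h
    omega
  set b : A := v'[k₀ + v.length]'hkv_lt with hb
  have hbpos : 0 < (σ b).length := List.length_pos_iff.2 (sigma_ne_nil hret b)
  set RB : List B := flat σ (v'.drop (k₀ + v.length + 1)) with hRB
  have hDb : G.drop (cut σ v' (k₀ + v.length)) = σ b ++ RB := by
    rw [hGdef, flat_drop_cut v' (by omega), flat_drop_eq v' hkv_lt]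
  have hDZ : G.drop (cut σ v' (k₀ + v.length)) = p ++ ([d] ++ suf) := by
    have h7 : G = (Pfx ++ flat σ v) ++ (p ++ ([d] ++ suf)) := by
      rw [hsplitG, hZ]; simp [List.append_assoc]
    have h8 : cut σ v' (k₀ + v.length) = (Pfx ++ flat σ v).length := by
      simp only [List.length_append]; omega
    rw [h8]; exact drop_eq_of_append h7
  have hDbZ : σ b ++ RB = p ++ ([d] ++ suf) := by rw [← hDb, hDZ]
  have hpd : p ++ [d] <+: σ b ++ w := by
    by_cases hcase : p.length < (σ b).length
    · have h9 : p ++ [d] <+: σ b ++ RB := by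
        rw [hDbZ]
        exact ⟨suf, by simp⟩
      have h10 : p ++ [d] <+: σ b :=
        List.prefix_of_prefix_length_le h9 (List.prefix_append _ _)
          (by simp only [List.length_append, List.length_singleton]; omega)
      exact h10.trans (List.prefix_append _ _)
    · push_neg at hcase
      have hsbp : σ b <+: p :=
        List.prefix_of_prefix_length_le ⟨RB, hDbZ⟩ (List.prefix_append _ _) hcase
      obtain ⟨z, hz⟩ := hsbp
      have hpz : p.drop (σ b).length = z := by rw [← hz]; exact List.drop_left
      have hsucc : cut σ v' (k₀ + v.length + 1) =
          cut σ v' (k₀ + v.length) + (σ b).length := by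
        have h5 := cut_succ_eq (σ := σ) v' hkv_lt
        rw [← hb] at h5; exact h5
      have hocc : w <+: (G ++ w).drop (cut σ v' (k₀ + v.length + 1)) := by
        rw [occ_iff hret]; exact ⟨_, rfl⟩
      have h11 : (G ++ w).drop (cut σ v' (k₀ + v.length + 1)) =
          z ++ ([d] ++ (suf ++ w)) := by
        have h12 : G ++ w = ((Pfx ++ flat σ v) ++ σ b) ++ (z ++ ([d] ++ (suf ++ w))) := by
          rw [hsplitG, hZ, ← hz]; simp [List.append_assoc]
        have h13 : cut σ v' (k₀ + v.length + 1) = ((Pfx ++ flat σ v) ++ σ b).length := by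
          simp only [List.length_append]; omega
        rw [h13]; exact drop_eq_of_append h12
      rw [h11] at hocc
      by_cases hzw : w.length ≤ z.length
      · exfalso
        have hwz2 : w <+: z :=
          List.prefix_of_prefix_length_le hocc (List.prefix_append _ _) hzw
        obtain ⟨q, hq⟩ := id hpbw
        have h14 : (σ bw ++ w).drop (σ b).length = z ++ q := by
          rw [← hq, List.drop_append_of_le_length hcase, hpz]
        have h15 : w <+: (σ bw ++ w).drop (σ b).length := by
          rw [h14]; exact hwz2.trans (List.prefix_append _ _)
        rcases occ_single' hret bw h15 with h16 | h16
        · omega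
        · have h17 : p.length ≤ (σ bw).length + w.length := by
            have := hpbw.length_le
            simpa using this
          have hzlen : (σ b).length + z.length = p.length := by
            rw [← hz]; simp
          have h19 : p.length = (σ bw ++ w).length := by
            simp only [List.length_append]; omega
          exact hpbw' (List.IsPrefix.eq_of_length hpbw h19)
      · push_neg at hzw
        have h15 : z ++ [d] <+: w := by
          refine List.prefix_of_prefix_length_le ⟨suf ++ w, by simp⟩ hocc ?_
          simp only [List.length_append, List.length_singleton]
          omega
        obtain ⟨q2, hq2⟩ := h15
        refine ⟨q2, ?_⟩
        rw [← hz, ← hq2]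
        simp [List.append_assoc]
  -- Claim E: membership in the language
  have hmem2 : a :: (v ++ [b]) ∈ lang X := by
    have hlen2 : k₀ - 1 + (v.length + 2) ≤ v'.length := by omega
    have hEq : (v'.drop (k₀ - 1)).take (v.length + 2) = a :: (v ++ [b]) := by
      apply List.ext_getElem
      · simp only [List.length_take, List.length_drop, List.length_cons,
          List.length_append, List.length_nil]
        rw [Nat.min_eq_left (by omega)]
      · intro i h1 h2
        have h3 : i < v.length + 2 := by
          simp only [List.length_take, List.length_drop] at h1
          omega
        have hidx : k₀ - 1 + i < v'.length := by omega
        have hL : ((v'.drop (k₀ - 1)).take (v.length + 2))[i] = v'[k₀ - 1 + i]'hidx := by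
          rw [List.getElem_take, List.getElem_drop]
        rw [hL]
        match i, h3 with
        | 0, _ =>
          have h5 : (a :: (v ++ [b]))[0] = a := rfl
          rw [h5, getElem_idx_congr (show k₀ - 1 + 0 = k₀ - 1 by omega) hidx]
        | i + 1, h3 =>
          have hR : (a :: (v ++ [b]))[i + 1] = (v ++ [b])[i]'(by
            simp only [List.length_append, List.length_singleton]; omega) := rfl
          rw [hR]
          by_cases hi : i < v.length
          · have hR2 : (v ++ [b])[i]'(by
              simp only [List.length_append, List.length_singleton]; omega) = v[i]'hi :=
              List.getElem_append_left hi
            rw [hR2]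
            have h4 : k₀ - 1 + (i + 1) = k₀ + i := by omega
            rw [getElem_idx_congr h4 hidx]
            exact hLet i hi
          · have hieq : i = v.length := by omega
            subst hieq
            have hR2 : (v ++ [b])[v.length]'(by
              simp only [List.length_append, List.length_singleton]; omega) = b := by
              rw [List.getElem_append_right (le_refl _)]
              simp
            rw [hR2]
            have h4 : k₀ - 1 + (v.length + 1) = k₀ + v.length := by omega
            rw [getElem_idx_congr h4 hidx]
    have hinfix : (a :: (v ++ [b])) <:+: v' := by
      refine ⟨v'.take (k₀ - 1), (v'.drop (k₀ - 1)).drop (v.length + 2), ?_⟩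
      rw [← hEq, List.append_assoc, List.take_append_drop, List.take_append_drop]
    exact lang_infix hinfix hv'
  exact ⟨a, b, hmem2, ⟨(σ a).take ecut, hta⟩, hpd⟩

end Extract

lemma prefix_eq_of_length {l₁ l₂ t : List B} (h1 : l₁ <+: t) (h2 : l₂ <+: t)
    (h : l₁.length = l₂.length) : l₁ = l₂ :=
  List.IsPrefix.eq_of_length (List.prefix_of_prefix_length_le h1 h2 h.le) h

lemma suffix_eq_of_length {l₁ l₂ t : List B} (h1 : l₁ <:+ t) (h2 : l₂ <:+ t)
    (h : l₁.length = l₂.length) : l₁ = l₂ :=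
  List.IsSuffix.eq_of_length (suffix_of_suffix_length_le h1 h2 h.le) h

lemma prefix_snoc_getElem {l q : List B} (h : q <+: l) (hlt : q.length < l.length) :
    ∃ d : B, q ++ [d] <+: l := by
  obtain ⟨z, rfl⟩ := h
  cases z with
  | nil => simp at hlt
  | cons e z => exact ⟨e, z, by simp⟩

lemma c_unique {s t₁ t₂ : List B} {c₁ c₂ : B} (h : t₁ ++ c₁ :: s = t₂ ++ c₂ :: s) :
    c₁ = c₂ := by
  have hlen : t₁.length = t₂.length := by
    have := congrArg List.length h
    simp only [List.length_append, List.length_cons] at this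
    omega
  have h2 : c₁ :: s = c₂ :: s := by
    have d1 : (t₁ ++ c₁ :: s).drop t₁.length = c₁ :: s := List.drop_left
    have d2 : (t₂ ++ c₂ :: s).drop t₂.length = c₂ :: s := List.drop_left
    rw [← d1, ← d2, h, hlen]
  simpa using h2

lemma d_unique {l p : List B} {d₁ d₂ : B} (h1 : p ++ [d₁] <+: l) (h2 : p ++ [d₂] <+: l) :
    d₁ = d₂ := by
  have h3 := prefix_eq_of_length h1 h2 (by simp)
  have h4 := List.append_cancel_left h3
  simpa using h4

end Stmt17

/-- Let `σ` be a return morphism that is planar preserving from `(⪯L, ⪯R)` to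
`(≤L, ≤R)`. Then a word `v ∈ L(X)` is planar for `(⪯L, ⪯R)` if and only if every
extended image of `v` under `σ` is planar for `(≤L, ≤R)`. -/
theorem stmt_17 {A B : Type*} [TopologicalSpace A] [DiscreteTopology A]
    (σ : A → List B) (w : List B) (hret : IsReturnMorphism σ w)
    (rL rR : A → A → Prop) (leL leR : B → B → Prop)
    (hrL : IsLinearOrder A rL) (hrR : IsLinearOrder A rR)
    (hleL : IsLinearOrder B leL) (hleR : IsLinearOrder B leR)
    (hL : LeftOrderPreserving σ rL leL) (hR : RightOrderPreserving σ w rR leR)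
    (X : Set (ℤ → A)) (hX : IsShiftSpace X) (v : List A) (hv : v ∈ lang X) :
    PlanarWord (lang X) rL rR v ↔
      ∀ u : List B, IsExtendedImage σ w X v u →
        PlanarWord (imageLang σ X) leL leR u := by
  classical
  have hreflR : ∀ d : B, leR d d := hleR.toIsPartialOrder.toIsPreorder.toRefl.refl
  have hreflrR : ∀ b : A, rR b b := hrR.toIsPartialOrder.toIsPreorder.toRefl.refl
  constructor
  · -- forward direction
    intro hpl u hu c₁ d₁ c₂ d₂ h1 h2 hlecc hcc
    obtain ⟨s, p, hu_eq, hwp, humem, aw, bw, hawbw, ⟨tw, htwne, hsaw⟩, hpbw, hpbw'⟩ := hu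
    subst hu_eq
    obtain ⟨a₁, b₁, hm1, ⟨t₁, ht₁⟩, hpd1⟩ :=
      Stmt17.extract hret hwp htwne hsaw hpbw hpbw' h1
    obtain ⟨a₂, b₂, hm2, ⟨t₂, ht₂⟩, hpd2⟩ :=
      Stmt17.extract hret hwp htwne hsaw hpbw hpbw' h2
    by_cases hdd : d₁ = d₂
    · subst hdd; exact hreflR d₁
    have haa : a₁ ≠ a₂ := by
      rintro rfl
      exact hcc (Stmt17.c_unique (ht₁.symm.trans ht₂))
    have hsTL : memTL σ s := by
      refine ⟨a₁, a₂, haa, ⟨t₁ ++ [c₁], by rw [ht₁]; simp⟩,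
        ⟨t₂ ++ [c₂], by rw [ht₂]; simp⟩, ?_⟩
      intro t hta htb
      by_contra hgt
      push_neg at hgt
      have hc1 : c₁ :: s <:+ t := Stmt17.suffix_of_suffix_length_le
        ⟨t₁, ht₁.symm⟩ hta (by simp only [List.length_cons]; omega)
      have hc2 : c₂ :: s <:+ t := Stmt17.suffix_of_suffix_length_le
        ⟨t₂, ht₂.symm⟩ htb (by simp only [List.length_cons]; omega)
      have h5 := Stmt17.suffix_eq_of_length hc1 hc2 (by simp)
      injection h5 with h6 _
      exact hcc h6
    have hrl : rL a₁ a₂ := by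
      rcases hrL.toTotal.total a₁ a₂ with h | h
      · exact h
      · exfalso
        have h5 := hL s hsTL a₂ a₁ c₂ c₁ h haa.symm ⟨t₂, ht₂⟩ ⟨t₁, ht₁⟩
        exact hcc (hleL.toIsPartialOrder.toAntisymm.antisymm _ _ hlecc h5)
    have hrb : rR b₁ b₂ := hpl a₁ b₁ a₂ b₂ hm1 hm2 hrl haa
    have hbb : b₁ ≠ b₂ := by
      rintro rfl
      exact hdd (Stmt17.d_unique hpd1 hpd2)
    have hpTR : memTR σ w p := by
      refine ⟨b₁, b₂, hbb, (List.prefix_append p [d₁]).trans hpd1,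
        (List.prefix_append p [d₂]).trans hpd2, ?_⟩
      intro t h1' h2'
      by_contra hgt
      push_neg at hgt
      have hc1 : p ++ [d₁] <+: t := List.prefix_of_prefix_length_le hpd1 h1'
        (by simp only [List.length_append, List.length_cons, List.length_nil]; omega)
      have hc2 : p ++ [d₂] <+: t := List.prefix_of_prefix_length_le hpd2 h2'
        (by simp only [List.length_append, List.length_cons, List.length_nil]; omega)
      exact hdd (Stmt17.d_unique hc1 hc2)
    have hd1 : ∃ z, σ b₁ ++ w = p ++ d₁ :: z := by
      obtain ⟨z, hz⟩ := hpd1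
      exact ⟨z, by rw [← hz]; simp⟩
    have hd2 : ∃ z, σ b₂ ++ w = p ++ d₂ :: z := by
      obtain ⟨z, hz⟩ := hpd2
      exact ⟨z, by rw [← hz]; simp⟩
    exact hR p hpTR b₁ b₂ d₁ d₂ hrb hbb hd1 hd2
  · -- reverse direction
    intro hpl a₁ b₁ a₂ b₂ hm1 hm2 hrl haa
    by_cases hbb : b₁ = b₂
    · subst hbb; exact hreflrR b₁
    obtain ⟨s, hlcs⟩ := Stmt17.exists_lcs (σ a₁) (σ a₂)
    obtain ⟨p, hlcp⟩ := Stmt17.exists_lcp (σ b₁ ++ w) (σ b₂ ++ w)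
    obtain ⟨hs1, hs2, hs3⟩ := id hlcs
    obtain ⟨hp1, hp2, hp3⟩ := id hlcp
    obtain ⟨t₁, ht₁⟩ := id hs1
    obtain ⟨t₂, ht₂⟩ := id hs2
    have ht₁ne : t₁ ≠ [] := by
      rintro rfl
      simp only [List.nil_append] at ht₁
      exact Stmt17.not_sigma_suffix hret haa (ht₁ ▸ hs2)
    have ht₂ne : t₂ ≠ [] := by
      rintro rfl
      simp only [List.nil_append] at ht₂
      exact Stmt17.not_sigma_suffix hret haa.symm (ht₂ ▸ hs1)
    have ht₁' : σ a₁ = t₁.dropLast ++ (t₁.getLast ht₁ne :: s) := by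
      conv_lhs => rw [← ht₁, ← List.dropLast_append_getLast ht₁ne]
      simp
    have ht₂' : σ a₂ = t₂.dropLast ++ (t₂.getLast ht₂ne :: s) := by
      conv_lhs => rw [← ht₂, ← List.dropLast_append_getLast ht₂ne]
      simp
    set c₁ := t₁.getLast ht₁ne with hc₁def
    set c₂ := t₂.getLast ht₂ne with hc₂def
    have hcc : c₁ ≠ c₂ := by
      intro h
      have h5 : (c₁ :: s).length ≤ s.length := hs3 (c₁ :: s) ⟨t₁.dropLast, ht₁'.symm⟩
        (by rw [h]; exact ⟨t₂.dropLast, ht₂'.symm⟩)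
      simp at h5
    have hwp : w <+: p := List.prefix_of_prefix_length_le (hret.2.2 b₁).2.1 hp1
      (hp3 w (hret.2.2 b₁).2.1 (hret.2.2 b₂).2.1)
    have hne1 : p ≠ σ b₁ ++ w := by
      intro h
      exact Stmt17.not_sigma_w_prefix hret hbb (h ▸ hp2)
    have hne2 : p ≠ σ b₂ ++ w := by
      intro h
      exact Stmt17.not_sigma_w_prefix hret (Ne.symm hbb) (h ▸ hp1)
    have hlt1 : p.length < (σ b₁ ++ w).length :=
      lt_of_le_of_ne hp1.length_le (fun h => hne1 (List.IsPrefix.eq_of_length hp1 h))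
    have hlt2 : p.length < (σ b₂ ++ w).length :=
      lt_of_le_of_ne hp2.length_le (fun h => hne2 (List.IsPrefix.eq_of_length hp2 h))
    obtain ⟨d₁, hd₁⟩ := Stmt17.prefix_snoc_getElem hp1 hlt1
    obtain ⟨d₂, hd₂⟩ := Stmt17.prefix_snoc_getElem hp2 hlt2
    have hdd : d₁ ≠ d₂ := by
      intro h
      have h5 := hp3 (p ++ [d₁]) hd₁ (by rw [h]; exact hd₂)
      simp at h5
    -- general membership constructor
    have hmemgen : ∀ (a b : A) (q r : List B), (a :: (v ++ [b])) ∈ lang X →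
        (∃ t', t' ++ q = σ a) → (r <+: σ b ++ w) →
        (q ++ Stmt17.flat σ v ++ r) ∈ imageLang σ X := by
      rintro a b q r hmem ⟨t', ht'⟩ hr
      obtain ⟨e, helen, hve⟩ := Stmt17.lang_extend hmem w.length
      refine ⟨(a :: (v ++ [b])) ++ e, hve, ?_⟩
      have hwfe : w <+: Stmt17.flat σ e := Stmt17.w_prefix_flat hret
        (by have := Stmt17.length_le_flat hret e; omega)
      have hr2 : r <+: σ b ++ Stmt17.flat σ e := by
        refine hr.trans ?_
        obtain ⟨zz, hzz⟩ := hwfe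
        exact ⟨zz, by rw [← hzz]; simp⟩
      obtain ⟨z, hz⟩ := hr2
      refine ⟨t', z, ?_⟩
      show t' ++ (q ++ Stmt17.flat σ v ++ r) ++ z = Stmt17.flat σ ((a :: (v ++ [b])) ++ e)
      have hfl : Stmt17.flat σ ((a :: (v ++ [b])) ++ e) =
          σ a ++ (Stmt17.flat σ v ++ (σ b ++ Stmt17.flat σ e)) := by
        simp [Stmt17.flat_append, Stmt17.flat_cons, List.append_assoc]
      rw [hfl, ← ht', ← hz]
      simp [List.append_assoc]
    have hIsExt : IsExtendedImage σ w X v (s ++ Stmt17.flat σ v ++ p) := by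
      refine ⟨s, p, rfl, hwp, hmemgen a₁ b₁ s p hm1 ⟨t₁, ht₁⟩ hp1, a₁, b₁, hm1,
        ⟨t₁, ht₁ne, ht₁.symm⟩, hp1, hne1⟩
    have hplu := hpl _ hIsExt
    have hmc : ∀ (a b : A) (c dd : B), (a :: (v ++ [b])) ∈ lang X →
        (∃ t', t' ++ (c :: s) = σ a) → (p ++ [dd] <+: σ b ++ w) →
        (c :: ((s ++ Stmt17.flat σ v ++ p) ++ [dd])) ∈ imageLang σ X := by
      intro a b c dd hmem hts hpb
      have h5 := hmemgen a b (c :: s) (p ++ [dd]) hmem hts hpb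
      have h6 : (c :: s) ++ Stmt17.flat σ v ++ (p ++ [dd]) =
          c :: ((s ++ Stmt17.flat σ v ++ p) ++ [dd]) := by
        simp [List.append_assoc]
      rwa [h6] at h5
    have hmc₁ := hmc a₁ b₁ c₁ d₁ hm1 ⟨t₁.dropLast, ht₁'.symm⟩ hd₁
    have hmc₂ := hmc a₂ b₂ c₂ d₂ hm2 ⟨t₂.dropLast, ht₂'.symm⟩ hd₂
    have hleLcc : leL c₁ c₂ := hL s ⟨a₁, a₂, haa, hlcs⟩ a₁ a₂ c₁ c₂ hrl haa
      ⟨t₁.dropLast, ht₁'⟩ ⟨t₂.dropLast, ht₂'⟩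
    have hleRdd : leR d₁ d₂ := hplu c₁ d₁ c₂ d₂ hmc₁ hmc₂ hleLcc hcc
    rcases hrR.toTotal.total b₁ b₂ with h | h
    · exact h
    · exfalso
      have he1 : ∃ z, σ b₂ ++ w = p ++ d₂ :: z := by
        obtain ⟨z, hz⟩ := hd₂
        exact ⟨z, by rw [← hz]; simp⟩
      have he2 : ∃ z, σ b₁ ++ w = p ++ d₁ :: z := by
        obtain ⟨z, hz⟩ := hd₁
        exact ⟨z, by rw [← hz]; simp⟩
      have h6 := hR p ⟨b₁, b₂, hbb, hlcp⟩ b₂ b₁ d₂ d₁ h (Ne.symm hbb) he1 he2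
      exact hdd (hleR.toIsPartialOrder.toAntisymm.antisymm _ _ hleRdd h6)
end

section
/- Let X be a minimal dendric shift over A that is planar for (≤^L, ≤^R). Then every sufficiently long left special factor w of X satisfies Card(E^L_X(w)) = 2 and the two letters of E^L_X(w) are consecutive for ≤^L. -/
/-- A minimal shift space: a shift space whose only closed shift-invariant subsets
are `∅` and itself. -/
def IsMinimal {A : Type*} [TopologicalSpace A] (X : Set (ℤ → A)) : Prop :=
  IsShiftSpace X ∧ ∀ Y : Set (ℤ → A), Y ⊆ X → IsClosed Y → shiftMap '' Y = Y → Y = ∅ ∨ Y = X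

/-- The extension graph of the word `v` with respect to the factorial language `L`:
the bipartite graph on the left extensions and the right extensions of `v`, with an
edge between `a` (left) and `b` (right) whenever `a v b ∈ L`. -/
def extGraph {A : Type*} (L : Set (List A)) (v : List A) :
    SimpleGraph ({a : A // a :: v ∈ L} ⊕ {b : A // v ++ [b] ∈ L}) :=
  SimpleGraph.fromRel (fun p q =>
    match p, q with
    | Sum.inl a, Sum.inr b => (a.1 :: (v ++ [b.1])) ∈ L
    | _, _ => False)

namespace S18

variable {A : Type*}

/-- window of `x` starting at `i`, of length `n`. -/
def win (x : ℤ → A) (i : ℤ) (n : ℕ) : List A := List.ofFn (fun k : Fin n => x (i + (k : ℕ)))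

@[simp] lemma length_win (x : ℤ → A) (i : ℤ) (n : ℕ) : (win x i n).length = n := by
  simp [win]

lemma win_congr {x y : ℤ → A} {i j : ℤ} {n : ℕ}
    (h : ∀ k : ℕ, k < n → x (i + k) = y (j + k)) : win x i n = win y j n :=
  congrArg List.ofFn (funext fun k => h k k.2)

lemma win_inj {x y : ℤ → A} {i j : ℤ} {n : ℕ} (h : win x i n = win y j n) :
    ∀ k : ℕ, k < n → x (i + k) = y (j + k) := by
  intro k hk
  have := List.ofFn_inj.mp h
  exact congrFun this ⟨k, hk⟩

lemma win_succ (x : ℤ → A) (i : ℤ) (n : ℕ) : win x i (n + 1) = x i :: win x (i + 1) n := by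
  rw [win, List.ofFn_succ]
  congr 1
  · norm_num
  · exact congrArg List.ofFn (funext fun k => by congr 1; push_cast [Fin.val_succ]; ring)

lemma win_snoc (x : ℤ → A) (i : ℤ) (n : ℕ) : win x i (n + 1) = win x i n ++ [x (i + n)] := by
  rw [win, List.ofFn_succ', List.concat_eq_append]
  congr 1

lemma win_mem {X : Set (ℤ → A)} {x : ℤ → A} (hx : x ∈ X) (i : ℤ) (n : ℕ) :
    win x i n ∈ lang X := by
  refine ⟨x, hx, i, fun k => ?_⟩
  exact (List.get_ofFn _ k).symm

end S18

namespace S18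

variable {A : Type*} {X : Set (ℤ → A)}

lemma shift_mem (hX3 : shiftMap '' X = X) :
    ∀ (m : ℤ) {x : ℤ → A}, x ∈ X → (fun k => x (k + m)) ∈ X := by
  have fwd : ∀ {x : ℤ → A}, x ∈ X → (fun k => x (k + 1)) ∈ X := by
    intro x hx
    have : shiftMap x ∈ shiftMap '' X := ⟨x, hx, rfl⟩
    rw [hX3] at this
    exact this
  have bwd : ∀ {x : ℤ → A}, x ∈ X → (fun k => x (k - 1)) ∈ X := by
    intro x hx
    rw [← hX3] at hx
    obtain ⟨x', hx', h⟩ := hx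
    have he : (fun k => x (k - 1)) = x' := by
      funext k
      rw [← h]
      show x' (k - 1 + 1) = x' k
      congr 1
      ring
    rw [he]
    exact hx'
  intro m
  induction m using Int.induction_on with
  | zero => intro x hx; simpa using hx
  | succ i ih =>
      intro x hx
      have h1 := fwd (ih hx)
      have : (fun k => (fun k' => x (k' + i)) (k + 1)) = fun k => x (k + (i + 1)) := by
        funext k; show x (k + 1 + i) = x (k + (i + 1)); congr 1; ring
      rw [this] at h1
      exact h1
  | pred i ih =>
      intro x hx
      have h1 := bwd (ih hx)
      have : (fun k => (fun k' => x (k' + -i)) (k - 1)) = fun k => x (k + (-i - 1)) := by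
        funext k; show x (k - 1 + -i) = x (k + (-i - 1)); congr 1; ring
      rw [this] at h1
      exact h1

lemma lang_realize (hX3 : shiftMap '' X = X) {u : List A} (hu : u ∈ lang X) :
    ∃ x ∈ X, u = win x 0 u.length := by
  obtain ⟨x, hx, i, hfac⟩ := hu
  refine ⟨fun k => x (k + i), shift_mem hX3 i hx, ?_⟩
  apply List.ext_get (by simp)
  intro t h1 h2
  rw [← hfac ⟨t, h1⟩]
  simp only [win, List.get_ofFn]
  show x (i + t) = x (0 + t + i)
  congr 1
  ring

lemma cons_elim (hX3 : shiftMap '' X = X) {a : A} {x : ℤ → A} {n : ℕ}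
    (h : (a :: win x 0 n) ∈ lang X) :
    ∃ z ∈ X, z 0 = a ∧ ∀ k : ℕ, k < n → z (1 + (k : ℤ)) = x (k : ℤ) := by
  obtain ⟨z, hz, he⟩ := lang_realize hX3 h
  rw [List.length_cons, length_win] at he
  rw [win_succ] at he
  have h0 : a = z 0 := by
    have := List.head_eq_of_cons_eq he
    exact this
  have ht : win x 0 n = win z (0 + 1) n := List.tail_eq_of_cons_eq he
  refine ⟨z, hz, h0.symm, ?_⟩
  intro k hk
  have := win_inj ht k hk
  rw [show ((0:ℤ) + 1) = 1 by ring] at this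
  rw [← this]
  congr 1
  ring

end S18

namespace S18

variable {A : Type*}

/-- difference of two periods is a period, when the window is long enough. -/
lemma per_diff (x : ℤ → A) (n d d' : ℕ) (h1 : 1 ≤ d) (hdd : d < d') (hn : d + d' ≤ n)
    (hp : ∀ r : ℕ, r + d < n → x (r : ℤ) = x ((r + d : ℕ) : ℤ))
    (hp' : ∀ r : ℕ, r + d' < n → x (r : ℤ) = x ((r + d' : ℕ) : ℤ)) :
    ∀ r : ℕ, r + (d' - d) < n → x (r : ℤ) = x ((r + (d' - d) : ℕ) : ℤ) := by
  intro r hre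
  by_cases hc : r + d' < n
  · have s1 := hp' r hc
    have s2 := hp (r + (d' - d)) (by omega)
    rw [s1, s2]
    congr 1
    omega
  · have hrd : d ≤ r := by omega
    have s1 := hp (r - d) (by omega)
    have s2 := hp' (r - d) (by omega)
    calc x (r : ℤ) = x ((r - d + d : ℕ) : ℤ) := by congr 1; omega
      _ = x ((r - d : ℕ) : ℤ) := s1.symm
      _ = x ((r - d + d' : ℕ) : ℤ) := s2
      _ = x ((r + (d' - d) : ℕ) : ℤ) := by congr 1; omega

lemma per_eq (x : ℤ → A) (n : ℕ) : ∀ (s d d' : ℕ), d + d' ≤ s → 1 ≤ d → 1 ≤ d' → d + d' ≤ n →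
    (∀ r : ℕ, r + d < n → x (r : ℤ) = x ((r + d : ℕ) : ℤ)) →
    (∀ r : ℕ, r + d' < n → x (r : ℤ) = x ((r + d' : ℕ) : ℤ)) →
    x ((d : ℤ) - 1) = x ((d' : ℤ) - 1) := by
  intro s
  induction s with
  | zero => intro d d' hs h1 h1' _ _ _; omega
  | succ s ih =>
      intro d d' hs h1 h1' hn hp hp'
      rcases lt_trichotomy d d' with h | h | h
      · set e := d' - d with he
        have hpe := per_diff x n d d' h1 h hn hp hp'
        have h0 := ih d e (by omega) h1 (by omega) (by omega) hp hpe
        have s3 := hp (e - 1) (by omega)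
        rw [h0]
        calc x ((e : ℤ) - 1) = x ((e - 1 : ℕ) : ℤ) := by congr 1; omega
          _ = x ((e - 1 + d : ℕ) : ℤ) := s3
          _ = x ((d' : ℤ) - 1) := by congr 1; omega
      · subst h; rfl
      · set e := d - d' with he
        have hpe := per_diff x n d' d h1' h (by omega) hp' hp
        have h0 := ih d' e (by omega) h1' (by omega) (by omega) hp' hpe
        have s3 := hp' (e - 1) (by omega)
        rw [h0]
        refine Eq.symm ?_
        calc x ((e : ℤ) - 1) = x ((e - 1 : ℕ) : ℤ) := by congr 1; omega
          _ = x ((e - 1 + d' : ℕ) : ℤ) := s3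
          _ = x ((d : ℤ) - 1) := by congr 1; omega

end S18

namespace S18

lemma recur {A : Type*} [Fintype A] [TopologicalSpace A] [DiscreteTopology A]
    {X : Set (ℤ → A)} (hmin : IsMinimal X) (hover : ∀ a : A, [a] ∈ lang X) :
    ∃ R : ℕ, ∀ (a : A) (y : ℤ → A), y ∈ X → ∀ i : ℤ, ∃ t : ℕ, t < R ∧ y (i + (t : ℤ)) = a := by
  have hX3 : shiftMap '' X = X := hmin.1.2.2
  have hXc : IsClosed X := hmin.1.2.1
  have key : ∀ a : A, ∃ R : ℕ, ∀ y ∈ X, ∀ i : ℤ, ∃ t : ℕ, t < R ∧ y (i + (t : ℤ)) = a := by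
    intro a
    by_contra hcon
    push_neg at hcon
    set K : ℕ → Set (ℤ → A) := fun m => {z | z ∈ X ∧ ∀ t : ℤ, t.natAbs ≤ m → z t ≠ a} with hK
    have hKcl : ∀ m, IsClosed (K m) := by
      intro m
      have hKeq : K m = X ∩ ⋂ (t : ℤ) (_ : t.natAbs ≤ m), (fun z : ℤ → A => z t) ⁻¹' {a}ᶜ := by
        ext z
        simp [hK, Set.mem_iInter]
      rw [hKeq]
      exact hXc.inter (isClosed_iInter fun t => isClosed_iInter fun _ =>
        (isClosed_discrete _).preimage (continuous_apply t))
    have hKne : ∀ m, (K m).Nonempty := by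
      intro m
      obtain ⟨y, hy, i, hfree⟩ := hcon (2 * m + 1)
      refine ⟨fun k => y (k + (i + (m : ℤ))), shift_mem hX3 _ hy, ?_⟩
      intro t ht
      obtain ⟨s, hs1, hs2⟩ : ∃ s : ℕ, s < 2 * m + 1 ∧ (s : ℤ) = t + m := ⟨(t + m).toNat, by omega, by omega⟩
      have hfr := hfree s hs1
      show y (t + (i + (m : ℤ))) ≠ a
      have harg : t + (i + (m : ℤ)) = i + (s : ℤ) := by omega
      rw [harg]
      exact hfr
    have hdir : Directed (· ⊇ ·) K := by
      intro m m'
      exact ⟨max m m', fun z hz => ⟨hz.1, fun t ht => hz.2 t (le_trans ht (le_max_left m m'))⟩,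
        fun z hz => ⟨hz.1, fun t ht => hz.2 t (le_trans ht (le_max_right m m'))⟩⟩
    have hne := IsCompact.nonempty_iInter_of_directed_nonempty_isCompact_isClosed K hdir hKne
      (fun m => (hKcl m).isCompact) hKcl
    obtain ⟨z0, hz0⟩ := hne
    simp only [Set.mem_iInter] at hz0
    set Y : Set (ℤ → A) := {z | z ∈ X ∧ ∀ t : ℤ, z t ≠ a} with hY
    have hz0Y : z0 ∈ Y := ⟨(hz0 0).1, fun t => (hz0 t.natAbs).2 t le_rfl⟩
    have hYcl : IsClosed Y := by
      have hYeq : Y = X ∩ ⋂ (t : ℤ), (fun z : ℤ → A => z t) ⁻¹' {a}ᶜ := by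
        ext z
        simp [hY, Set.mem_iInter]
      rw [hYeq]
      exact hXc.inter (isClosed_iInter fun t =>
        (isClosed_discrete _).preimage (continuous_apply t))
    have hYinv : shiftMap '' Y = Y := by
      apply Set.Subset.antisymm
      · rintro _ ⟨z, ⟨hzX, hza⟩, rfl⟩
        refine ⟨?_, fun t => hza (t + 1)⟩
        have h2 : shiftMap z ∈ shiftMap '' X := ⟨z, hzX, rfl⟩
        rwa [hX3] at h2
      · rintro z ⟨hzX, hza⟩
        refine ⟨fun k => z (k - 1), ⟨?_, fun t => hza (t - 1)⟩, ?_⟩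
        · have h2 := shift_mem hX3 (-1) hzX
          have h3 : (fun k => z (k + (-1 : ℤ))) = fun k => z (k - 1) :=
            funext fun k => by rw [Int.sub_eq_add_neg]
          rwa [h3] at h2
        · funext k
          show z (k + 1 - 1) = z k
          congr 1
          ring
    rcases hmin.2 Y (fun z hz => hz.1) hYcl hYinv with h | h
    · rw [h] at hz0Y
      exact hz0Y
    · obtain ⟨xx, hxx, i, hf⟩ := hover a
      have h0 := hf ⟨0, by simp⟩
      rw [← h] at hxx
      exact hxx.2 (i + ((0 : ℕ) : ℤ)) (by simpa using h0)
  choose f hf using key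
  refine ⟨Finset.univ.sup f, fun a y hy i => ?_⟩
  obtain ⟨t, ht, h⟩ := hf a y hy i
  exact ⟨t, lt_of_lt_of_le ht (Finset.le_sup (Finset.mem_univ a)), h⟩

end S18

namespace S18

lemma squeeze {A : Type*} {X : Set (ℤ → A)} {rL rR : A → A → Prop}
    (hrR : IsLinearOrder A rR)
    (hplanar : ∀ v ∈ lang X, PlanarWord (lang X) rL rR v)
    (hX3 : shiftMap '' X = X)
    {a b c : A} {x : ℤ → A} {n : ℕ} (hx : x ∈ X)
    (ha : (a :: win x 0 n) ∈ lang X) (hb : (b :: win x 0 n) ∈ lang X)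
    (hac : rL a c) (hcb : rL c b) (h1 : a ≠ c) (h2 : c ≠ b) :
    ∀ y ∈ X, ∀ i : ℤ, y i = c → ∀ t : ℕ, t < n → y (i + 1 + (t : ℤ)) = x (t : ℤ) := by
  obtain ⟨za, hzaX, hza0, hzak⟩ := cons_elim hX3 ha
  obtain ⟨zb, hzbX, hzb0, hzbk⟩ := cons_elim hX3 hb
  intro y hy i hyi t
  induction t using Nat.strong_induction_on with
  | _ t IH =>
    intro htn
    have hvL : win x 0 t ∈ lang X := win_mem hx 0 t
    have m1 : (a :: (win x 0 t ++ [x (t : ℤ)])) ∈ lang X := by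
      have he : win za 0 (t + 2) = a :: (win x 0 t ++ [x (t : ℤ)]) := by
        have hw1 : win za (0 + 1) t = win x 0 t := win_congr (fun k hk => by
          have h5 := hzak k (by omega)
          rw [show (0 : ℤ) + 1 + (k : ℕ) = 1 + (k : ℕ) by ring, h5,
            show (0 : ℤ) + (k : ℕ) = (k : ℕ) by ring])
        have hl1 : za (0 + 1 + (t : ℕ)) = x (t : ℕ) := by
          rw [show (0 : ℤ) + 1 + (t : ℕ) = 1 + (t : ℕ) by ring, hzak t htn]
        rw [show t + 2 = (t + 1) + 1 from rfl, win_succ, win_snoc, hza0, hw1, hl1]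
      have hm := win_mem hzaX 0 (t + 2)
      rwa [he] at hm
    have m2 : (b :: (win x 0 t ++ [x (t : ℤ)])) ∈ lang X := by
      have he : win zb 0 (t + 2) = b :: (win x 0 t ++ [x (t : ℤ)]) := by
        have hw2 : win zb (0 + 1) t = win x 0 t := win_congr (fun k hk => by
          have h5 := hzbk k (by omega)
          rw [show (0 : ℤ) + 1 + (k : ℕ) = 1 + (k : ℕ) by ring, h5,
            show (0 : ℤ) + (k : ℕ) = (k : ℕ) by ring])
        have hl2 : zb (0 + 1 + (t : ℕ)) = x (t : ℕ) := by
          rw [show (0 : ℤ) + 1 + (t : ℕ) = 1 + (t : ℕ) by ring, hzbk t htn]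
        rw [show t + 2 = (t + 1) + 1 from rfl, win_succ, win_snoc, hzb0, hw2, hl2]
      have hm := win_mem hzbX 0 (t + 2)
      rwa [he] at hm
    have m3 : (c :: (win x 0 t ++ [y (i + 1 + (t : ℤ))])) ∈ lang X := by
      have he : win y i (t + 2) = c :: (win x 0 t ++ [y (i + 1 + (t : ℤ))]) := by
        have hw3 : win y (i + 1) t = win x 0 t := win_congr (fun k hk => by
          have h5 := IH k hk (by omega)
          rw [h5, show (0 : ℤ) + (k : ℕ) = (k : ℕ) by ring])
        rw [show t + 2 = (t + 1) + 1 from rfl, win_succ, win_snoc, hyi, hw3]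
      have hm := win_mem hy i (t + 2)
      rwa [he] at hm
    have hp := hplanar _ hvL
    have r1 := hp a (x (t : ℤ)) c (y (i + 1 + (t : ℤ))) m1 m3 hac h1
    have r2 := hp c (y (i + 1 + (t : ℤ))) b (x (t : ℤ)) m3 m2 hcb h2
    exact hrR.toIsPartialOrder.toAntisymm.antisymm _ _ r2 r1

end S18

/-- Let `X` be a minimal dendric shift over `A` that is planar for `(≤L, ≤R)`. Then
every sufficiently long left special factor `w` of `X` has exactly two left extensions,
and those two letters are consecutive for `≤L`. -/
theorem stmt_18 {A : Type*} [Fintype A] [TopologicalSpace A] [DiscreteTopology A]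
    (rL rR : A → A → Prop) (hrL : IsLinearOrder A rL) (hrR : IsLinearOrder A rR)
    (X : Set (ℤ → A)) (hmin : IsMinimal X) (hover : ∀ a : A, [a] ∈ lang X)
    (hdendric : ∀ v ∈ lang X, (extGraph (lang X) v).IsTree)
    (hplanar : ∀ v ∈ lang X, PlanarWord (lang X) rL rR v) :
    ∃ N : ℕ, ∀ w ∈ lang X, N ≤ w.length →
      2 ≤ ({c : A | c :: w ∈ lang X}).ncard →
      ∃ a b : A, Consecutive rL a b ∧ {c : A | c :: w ∈ lang X} = {a, b} := by
  classical
  have hX3 : shiftMap '' X = X := hmin.1.2.2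
  obtain ⟨R, hR⟩ := S18.recur hmin hover
  refine ⟨2 * R + 2, ?_⟩
  intro w hw hlen hcard
  obtain ⟨x, hx, hwx⟩ := S18.lang_realize hX3 hw
  set n := w.length with hn
  have main : ∀ a b c : A, (a :: w) ∈ lang X → (b :: w) ∈ lang X → rL a c → rL c b →
      a ≠ c → c ≠ b → a ≠ b → False := by
    intro a b c ha hb hac hcb h1 h2 hab
    rw [hwx] at ha hb
    have sq := S18.squeeze hrR hplanar hX3 hx ha hb hac hcb h1 h2
    have info : ∀ e : A, (e :: S18.win x 0 n) ∈ lang X →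
        ∃ d : ℕ, 1 ≤ d ∧ d ≤ R ∧
          (∀ r : ℕ, r + d < n → x (r : ℤ) = x ((r + d : ℕ) : ℤ)) ∧ e = x ((d : ℤ) - 1) := by
      intro e hee
      obtain ⟨z, hz, hz0, hzk⟩ := S18.cons_elim hX3 hee
      obtain ⟨t, htR, hzt⟩ := hR c z hz (-(R : ℤ))
      have hsq := sq z hz (-(R : ℤ) + (t : ℤ)) hzt
      refine ⟨R - t, by omega, by omega, ?_, ?_⟩
      · intro r hrd
        have e1 := hzk r (by omega)
        have e2 := hsq (r + (R - t)) (by omega)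
        have harg : (-(R : ℤ) + (t : ℤ)) + 1 + ((r + (R - t) : ℕ) : ℤ) = 1 + (r : ℤ) := by
          omega
        rw [harg] at e2
        rw [← e1, e2]
      · have e2 := hsq (R - t - 1) (by omega)
        have harg : (-(R : ℤ) + (t : ℤ)) + 1 + ((R - t - 1 : ℕ) : ℤ) = 0 := by omega
        rw [harg] at e2
        rw [← hz0, e2]
        congr 1
        omega
    obtain ⟨da, ha1, haR, hpa, hea⟩ := info a ha
    obtain ⟨db, hb1, hbR, hpb, heb⟩ := info b hb
    have hfin := S18.per_eq x n (da + db) da db le_rfl ha1 hb1 (by omega) hpa hpb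
    exact hab (by rw [hea, heb, hfin])
  have build : ∀ a b : A, (a :: w) ∈ lang X → (b :: w) ∈ lang X → a ≠ b → rL a b →
      ∃ a' b' : A, Consecutive rL a' b' ∧ {c : A | c :: w ∈ lang X} = {a', b'} := by
    intro a b haS hbS hab hrel
    refine ⟨a, b, ⟨hrel, hab, ?_⟩, ?_⟩
    · intro c hc1 hc2
      by_contra hc
      push_neg at hc
      exact main a b c haS hbS hc1 hc2 (Ne.symm hc.1) hc.2 hab
    · ext e
      simp only [Set.mem_setOf_eq, Set.mem_insert_iff, Set.mem_singleton_iff]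
      constructor
      · intro heS
        by_contra he
        push_neg at he
        obtain ⟨hea, heb⟩ := he
        rcases hrL.toTotal.total e a with h | h
        · exact (main e b a heS hbS h hrel hea hab heb).elim
        · rcases hrL.toTotal.total e b with h' | h'
          · exact (main a b e haS hbS h h' (Ne.symm hea) heb hab).elim
          · exact (main a e b haS heS hrel h' hab (Ne.symm heb) (Ne.symm hea)).elim
      · rintro (rfl | rfl)
        · exact haS
        · exact hbS
  have hfin : ({c : A | c :: w ∈ lang X}).Finite := Set.toFinite _
  have h1lt : 1 < ({c : A | c :: w ∈ lang X}).ncard := by omega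
  obtain ⟨a, b, haS, hbS, hab⟩ := (Set.one_lt_ncard_iff hfin).mp h1lt
  rcases hrL.toTotal.total a b with h | h
  · exact build a b haS hbS hab h
  · exact build b a hbS haS (Ne.symm hab) h
end
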